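/- Let $b > a > 0$. The closed region $\{(x,y) : -1 \le x \le 0,\ x - 1 \le y \le x\} \setminus \{(0,0), (-1,-2)\}$ is contained in the region where $(3b-a)x^2 - 2axy + 2ay^2 + 3(b-a)x + 3ay < 0$ together with its boundary minus the two points; consequently the integer translates by $(p,q) \mapsto (x+p, y+p+q)$-type lattice shifts of the open ellipse regions $\{(x,y) : (3b-a)(x-p)^2 - 2a(x-p)(y-q) + 2a(y-q)^2 + 3(b-a)(x-p) + 3a(y-q) < 0\}$, $(p,q) \in \mathbb{Z}^2$, cover all of $\mathbb{R}^2$. -/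
import Mathlib

lemma stmt_17_F (x y : ℝ) (h1 : -1 ≤ x) (h2 : x ≤ 0) (h3 : x - 1 ≤ y) (h4 : y ≤ x) :
    2 * x ^ 2 - 2 * x * y + 2 * y ^ 2 + 3 * y ≤ 0 := by
  nlinarith [mul_nonneg (by linarith : (0:ℝ) ≤ -x) (by linarith : (0:ℝ) ≤ 1 + x),
    mul_nonneg (by linarith : (0:ℝ) ≤ x - y) (by linarith : (0:ℝ) ≤ 1 - (x - y)),
    mul_nonneg (by linarith : (0:ℝ) ≤ 1 + x) (by linarith : (0:ℝ) ≤ x - y),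
    mul_nonneg (by linarith : (0:ℝ) ≤ -x) (by linarith : (0:ℝ) ≤ 1 - (x - y))]

lemma stmt_17_key (a b : ℝ) (ha : 0 < a) (hab : a < b) (x y : ℝ)
    (h1 : -1 ≤ x) (h2 : x ≤ 0) (h3 : x - 1 ≤ y) (h4 : y ≤ x) :
    (3 * b - a) * x ^ 2 - 2 * a * x * y + 2 * a * y ^ 2
      + 3 * (b - a) * x + 3 * a * y ≤ 0 := by
  have hF := stmt_17_F x y h1 h2 h3 h4
  have h5 : (b - a) * (x ^ 2 + x) ≤ 0 :=
    mul_nonpos_of_nonneg_of_nonpos (by linarith) (by nlinarith)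
  have h6 : a * (2 * x ^ 2 - 2 * x * y + 2 * y ^ 2 + 3 * y) ≤ 0 :=
    mul_nonpos_of_nonneg_of_nonpos ha.le hF
  nlinarith [h5, h6]

lemma stmt_17_strict (a b : ℝ) (ha : 0 < a) (hab : a < b) (x y : ℝ)
    (h1 : -1 < x) (h2 : x ≤ 0) (h3 : x - 1 < y) (h4 : y ≤ x)
    (hne : ¬(x = 0 ∧ y = 0)) :
    (3 * b - a) * x ^ 2 - 2 * a * x * y + 2 * a * y ^ 2
      + 3 * (b - a) * x + 3 * a * y < 0 := by
  have hF := stmt_17_F x y h1.le h2 h3.le h4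
  rcases lt_or_eq_of_le h2 with hx | hx
  · have h5 : (b - a) * (x ^ 2 + x) < 0 :=
      mul_neg_of_pos_of_neg (by linarith) (by nlinarith)
    have h6 : a * (2 * x ^ 2 - 2 * x * y + 2 * y ^ 2 + 3 * y) ≤ 0 :=
      mul_nonpos_of_nonneg_of_nonpos ha.le hF
    nlinarith [h5, h6]
  · subst hx
    have hy : y < 0 := lt_of_le_of_ne h4 (fun h => hne ⟨rfl, h⟩)
    have hy1 : -1 < y := by linarith
    nlinarith [mul_pos ha (mul_pos (by linarith : (0:ℝ) < -y) (by linarith : (0:ℝ) < 2*y+3))]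

/-- Let `b > a > 0`.  The closed parallelogram `{-1 ≤ x ≤ 0, x-1 ≤ y ≤ x}` minus the
two corners `(0,0)` and `(-1,-2)` is contained in the closed region
`(3b-a)x² - 2axy + 2ay² + 3(b-a)x + 3ay ≤ 0` bounded by the ellipse; consequently
the open regions bounded by the integer translates of the ellipse cover all of `ℝ²`:
for every `(x,y)` there is `(p,q) ∈ ℤ²` with
`(3b-a)(x-p)² - 2a(x-p)(y-q) + 2a(y-q)² + 3(b-a)(x-p) + 3a(y-q) < 0`. -/
theorem stmt_17 (a b : ℝ) (ha : 0 < a) (hab : a < b) :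
    (∀ x y : ℝ, -1 ≤ x → x ≤ 0 → x - 1 ≤ y → y ≤ x →
      (x, y) ≠ ((0 : ℝ), (0 : ℝ)) → (x, y) ≠ ((-1 : ℝ), (-2 : ℝ)) →
        (3 * b - a) * x ^ 2 - 2 * a * x * y + 2 * a * y ^ 2
          + 3 * (b - a) * x + 3 * a * y ≤ 0) ∧
    (∀ x y : ℝ, ∃ p q : ℤ,
      (3 * b - a) * (x - p) ^ 2 - 2 * a * (x - p) * (y - q) + 2 * a * (y - q) ^ 2
        + 3 * (b - a) * (x - p) + 3 * a * (y - q) < 0) := by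
  constructor
  · intro x y h1 h2 h3 h4 _ _
    exact stmt_17_key a b ha hab x y h1 h2 h3 h4
  · intro x y
    set p : ℤ := ⌈x⌉ with hp
    have hx1 : x - p ≤ 0 := by simp [hp]; exact Int.le_ceil x
    have hx2 : -1 < x - p := by
      have := Int.ceil_lt_add_one x
      linarith
    set q : ℤ := ⌈y - (x - p)⌉ with hq
    have hy1 : y - q ≤ x - p := by
      have := Int.le_ceil (y - (x - p))
      linarith
    have hy2 : (x - p) - 1 < y - q := by
      have := Int.ceil_lt_add_one (y - (x - p))
      linarith
    by_cases hz : x - p = 0 ∧ y - q = 0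
    · refine ⟨p + 1, q + 1, ?_⟩
      have hxp : (x : ℝ) - (p + 1 : ℤ) = -1 := by push_cast; linarith [hz.1]
      have hyq : (y : ℝ) - (q + 1 : ℤ) = -1 := by push_cast; linarith [hz.2]
      rw [hxp, hyq]
      ring_nf
      nlinarith
    · exact ⟨p, q, stmt_17_strict a b ha hab (x - p) (y - q) hx2 hx1 hy2 hy1 hz⟩
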